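/- Let M be a loopless matroid on a finite nonempty ground set E (with |E| = n) with set of bases ℬ, basis generating polynomial ψ_M(x) = Σ_{B∈ℬ} ∏_{e∈B} x_e, and c(M) = inf{ Σ_{B∈ℬ} c_B : c_B ≥ 0 and Σ_{B∈ℬ} c_B·χ_B ≥ 𝟙 componentwise }. Then for every real s > c(M) and every ε with 0 < ε ≤ e^{-1}, the function z ↦ 1 / ( ψ_M( (-ln|z_e|)_{e∈E} )^s · ∏_{e∈E} |z_e|^2 ) is integrable (with respect to Lebesgue measure on ℂ^E) on the ball { z ∈ ℂ^E : ‖z‖ < ε }. -/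

import Mathlib

open MeasureTheory

open Set Filter Real
open scoped Topology

lemma measurable_rpow_const (s : ℝ) : Measurable fun x : ℝ => x ^ s := by
  have h : (fun x : ℝ => x ^ s) = fun x =>
      if x = 0 then (if s = 0 then 1 else 0)
      else Real.exp (Real.log x * s) * Real.cos (s * Real.pi * (if x < 0 then 1 else 0)) := by
    funext x
    rcases lt_trichotomy x 0 with hx | hx | hx
    · rw [if_neg hx.ne, if_pos hx, Real.rpow_def_of_neg hx]
      norm_num
    · subst hx
      rw [if_pos rfl]
      rcases eq_or_ne s 0 with rfl | hs
      · simp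
      · rw [if_neg hs, Real.zero_rpow hs]
    · rw [if_neg hx.ne', if_neg (not_lt.mpr hx.le), Real.rpow_def_of_pos hx]
      norm_num
  rw [h]
  refine Measurable.ite (measurableSet_singleton 0) measurable_const ?_
  apply Measurable.mul
  · exact Real.measurable_exp.comp ((Real.measurable_log.mul measurable_const))
  · apply Real.measurable_cos.comp
    exact (measurable_const.mul (Measurable.ite (measurableSet_Iio (a := (0:ℝ))) measurable_const measurable_const))

lemma aux_real {δ ε : ℝ} (hδ : 0 < δ) (hε0 : 0 < ε) (hε1 : ε ≤ Real.exp (-1)) :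
    IntegrableOn (fun r : ℝ => r * ((-Real.log r) ^ (1 + δ) * r ^ 2)⁻¹) (Set.Ioo 0 ε) := by
  have hεlog : Real.log ε ≤ -1 := by
    have := Real.log_le_log hε0 hε1
    rwa [Real.log_exp] at this
  have hkey : ∀ r ∈ Ioo 0 ε, (1:ℝ) ≤ -Real.log r := by
    intro r hr
    have : Real.log r < Real.log ε := Real.log_lt_log hr.1 hr.2
    linarith
  set F : ℝ → ℝ := fun r => δ⁻¹ * (-Real.log r) ^ (-δ) with hF
  set g' : ℝ → ℝ := fun r => r⁻¹ * (-Real.log r) ^ (-δ - 1) with hg'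
  have hderiv : ∀ r ∈ Ioo 0 ε, HasDerivAt F (g' r) r := by
    intro r hr
    have hlogpos : (0:ℝ) < -Real.log r := lt_of_lt_of_le one_pos (hkey r hr)
    have h1 : HasDerivAt (fun r : ℝ => -Real.log r) (-r⁻¹) r :=
      (Real.hasDerivAt_log hr.1.ne').neg
    have h2 := (h1.rpow_const (p := -δ) (Or.inl hlogpos.ne')).const_mul δ⁻¹
    have hgr : g' r = δ⁻¹ * (-r⁻¹ * -δ * (-Real.log r) ^ (-δ - 1)) := by
      rw [hg']
      field_simp
    rw [hgr]
    exact h2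
  have hpos : ∀ r ∈ Ioo 0 ε, 0 ≤ g' r := by
    intro r hr
    have hlogpos : (0:ℝ) < -Real.log r := lt_of_lt_of_le one_pos (hkey r hr)
    exact mul_nonneg (inv_nonneg.mpr hr.1.le) (Real.rpow_nonneg hlogpos.le _)
  have hcont : ContinuousOn F (Icc 0 ε) := by
    intro r hr
    rcases eq_or_ne r 0 with rfl | hr0
    · have h0 : Tendsto F (𝓝[>] (0:ℝ)) (𝓝 0) := by
        have ht : Tendsto (fun r : ℝ => -Real.log r) (𝓝[>] (0:ℝ)) atTop :=
          tendsto_neg_atBot_atTop.comp Real.tendsto_log_nhdsGT_zero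
        have := ((tendsto_rpow_neg_atTop hδ).comp ht).const_mul δ⁻¹
        simpa [Function.comp] using this
      have hF0 : F 0 = 0 := by
        simp [hF, Real.log_zero, Real.zero_rpow (neg_ne_zero.mpr hδ.ne')]
      refine ContinuousWithinAt.mono ?_ (Icc_subset_Ici_self)
      rw [← continuousWithinAt_Ioi_iff_Ici]
      unfold ContinuousWithinAt
      rw [hF0]
      exact h0
    · have h0 : (0:ℝ) < r := lt_of_le_of_ne hr.1 (Ne.symm hr0)
      have hlogpos : (0:ℝ) < -Real.log r := by
        rcases eq_or_lt_of_le hr.2 with rfl | hlt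
        · linarith
        · exact lt_of_lt_of_le one_pos (hkey r ⟨h0, hlt⟩)
      exact (continuousAt_const.mul
        (((Real.continuousAt_log h0.ne').neg).rpow_const (Or.inl hlogpos.ne'))).continuousWithinAt
  have hInt : IntegrableOn g' (Ioc 0 ε) :=
    intervalIntegral.integrableOn_deriv_of_nonneg hcont hderiv hpos
  have hInt2 : IntegrableOn g' (Ioo 0 ε) := hInt.mono_set Ioo_subset_Ioc_self
  refine hInt2.congr_fun ?_ measurableSet_Ioo
  intro r hr
  have hlogpos : (0:ℝ) < -Real.log r := lt_of_lt_of_le one_pos (hkey r hr)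
  show r⁻¹ * (-Real.log r) ^ (-δ - 1) = r * ((-Real.log r) ^ (1 + δ) * r ^ 2)⁻¹
  rw [show -δ - 1 = -(1 + δ) by ring, Real.rpow_neg hlogpos.le]
  have hA : (0:ℝ) < (-Real.log r) ^ (1 + δ) := Real.rpow_pos_of_pos hlogpos _
  field_simp

lemma aux_complex {δ ε : ℝ} (hδ : 0 < δ) (hε0 : 0 < ε) (hε1 : ε ≤ Real.exp (-1)) :
    Integrable ((Metric.ball (0:ℂ) ε).indicator
      (fun w : ℂ => ((-Real.log (‖w‖)) ^ (1 + δ) * ‖w‖ ^ 2)⁻¹)) := by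
  set f0 : ℝ → ℝ := fun x => ((-Real.log x) ^ (1 + δ) * x ^ 2)⁻¹ with hf0
  set ρ : ℝ × ℝ → ℝ := fun q => Real.sqrt (q.1 ^ 2 + q.2 ^ 2) with hρ
  have hρcont : Continuous ρ := ((continuous_fst.pow 2).add (continuous_snd.pow 2)).sqrt
  have habs : ∀ q : ℝ × ℝ, ‖Complex.measurableEquivRealProd.symm q‖ = ρ q := by
    intro q
    simp [Complex.measurableEquivRealProd, Complex.norm_def, Complex.normSq_apply, hρ, sq]
  set A : Set (ℝ × ℝ) := ρ ⁻¹' (Iio ε) with hA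
  have hAmeas : MeasurableSet A := (hρcont.measurable (measurableSet_Iio))
  -- transfer to ℝ × ℝ
  rw [← (Complex.volume_preserving_equiv_real_prod.symm).integrable_comp_emb
      (Complex.measurableEquivRealProd.symm.measurableEmbedding)]
  have hcomp : ((Metric.ball (0:ℂ) ε).indicator
      (fun w : ℂ => ((-Real.log (‖w‖)) ^ (1 + δ) * ‖w‖ ^ 2)⁻¹)) ∘
      Complex.measurableEquivRealProd.symm = A.indicator (fun q => f0 (ρ q)) := by
    funext q
    have hmem : (Complex.measurableEquivRealProd.symm q ∈ Metric.ball (0:ℂ) ε) ↔ q ∈ A := by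
      rw [Metric.mem_ball, dist_zero_right, habs]
      exact Iff.rfl
    by_cases hq : q ∈ A
    · rw [Function.comp_apply, indicator_of_mem (hmem.mpr hq), indicator_of_mem hq, habs]
    · rw [Function.comp_apply, indicator_of_notMem (fun h => hq (hmem.mp h)),
        indicator_of_notMem hq]
  rw [hcomp]
  -- restrict to polarCoord.source
  suffices hS : IntegrableOn (A.indicator fun q => f0 (ρ q)) polarCoord.source volume by
    rw [← integrableOn_univ]
    exact hS.congr_set_ae polarCoord_source_ae_eq_univ.symm
  rw [IntegrableOn, integrable_indicator_iff hAmeas, IntegrableOn,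
    Measure.restrict_restrict hAmeas, Set.inter_comm]
  have himg : polarCoord.source ∩ A = polarCoord.symm '' (Ioo 0 ε ×ˢ Ioo (-π) π) := by
    ext q
    constructor
    · rintro ⟨hq, hq2⟩
      refine ⟨polarCoord q, ?_, polarCoord.left_inv hq⟩
      have ht := polarCoord.map_source hq
      rw [polarCoord_target] at ht
      have h1 : (polarCoord q).1 = ρ q := rfl
      exact ⟨⟨ht.1, by rw [h1]; exact hq2⟩, ht.2⟩
    · rintro ⟨p, hp, rfl⟩
      have hpt : p ∈ polarCoord.target := by
        rw [polarCoord_target]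
        exact ⟨hp.1.1, hp.2⟩
      refine ⟨polarCoord.map_target hpt, ?_⟩
      have : ρ (polarCoord.symm p) = (polarCoord (polarCoord.symm p)).1 := rfl
      rw [mem_preimage, mem_Iio, this, polarCoord.right_inv hpt]
      exact hp.1.2
  rw [himg]
  -- change of variables
  set B : ℝ × ℝ → ℝ × ℝ →L[ℝ] ℝ × ℝ := fun p =>
    LinearMap.toContinuousLinearMap (Matrix.toLin (Module.Basis.finTwoProd ℝ) (Module.Basis.finTwoProd ℝ)
      !![Real.cos p.2, -p.1 * Real.sin p.2; Real.sin p.2, p.1 * Real.cos p.2]) with hB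
  have B_det : ∀ p, (B p).det = p.1 := by
    intro p
    conv_rhs => rw [← one_mul p.1, ← Real.cos_sq_add_sin_sq p.2]
    simp only [hB, neg_mul, LinearMap.det_toContinuousLinearMap, LinearMap.det_toLin,
      Matrix.det_fin_two_of, sub_neg_eq_add]
    ring
  have hs₀ : MeasurableSet (Ioo (0:ℝ) ε ×ˢ Ioo (-π) π) :=
    measurableSet_Ioo.prod measurableSet_Ioo
  have hsub : (Ioo (0:ℝ) ε ×ˢ Ioo (-π) π) ⊆ polarCoord.symm.source := by
    rw [OpenPartialHomeomorph.symm_source, polarCoord_target]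
    exact Set.prod_mono Ioo_subset_Ioi_self subset_rfl
  refine (integrableOn_image_iff_integrableOn_abs_det_fderiv_smul volume hs₀
    (fun p _ => (hasFDerivAt_polarCoord_symm p).hasFDerivWithinAt)
    (polarCoord.symm.injOn.mono hsub) _).mpr ?_
  -- identify the integrand on s₀
  have hcongr : ∀ p ∈ Ioo (0:ℝ) ε ×ˢ Ioo (-π) π,
      (fun p => p.1 * ((-Real.log p.1) ^ (1 + δ) * p.1 ^ 2)⁻¹ * (fun _ : ℝ => (1:ℝ)) p.2) p
        = |(fderivPolarCoordSymm p).det| • f0 (ρ (polarCoord.symm p)) := by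
    intro p hp
    have h1 : ρ (polarCoord.symm p) = (polarCoord (polarCoord.symm p)).1 := rfl
    have hpt : p ∈ polarCoord.target := by
      rw [polarCoord_target]; exact ⟨hp.1.1, hp.2⟩
    rw [det_fderivPolarCoordSymm, h1, polarCoord.right_inv hpt, abs_of_pos hp.1.1, smul_eq_mul, hf0]
    simp
  refine (IntegrableOn.congr_fun ?_ hcongr hs₀)
  rw [IntegrableOn, Measure.volume_eq_prod, ← Measure.prod_restrict]
  exact Integrable.mul_prod (aux_real hδ hε0 hε1) ((integrableOn_const
    (measure_Ioo_lt_top.ne)))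

lemma aux_psi {α : Type*} [Fintype α] [DecidableEq α] (ℬ : Finset (Finset α)) (hne : ℬ.Nonempty)
    (hloopless : ∀ e : α, ∃ B ∈ ℬ, e ∈ B)
    (c : Finset α → ℝ) (hc0 : ∀ B ∈ ℬ, 0 ≤ c B)
    (hc1 : ∀ e : α, 1 ≤ ∑ B ∈ ℬ, c B * (if e ∈ B then 1 else 0))
    (δ s : ℝ) (hδ : 0 ≤ δ)
    (hsC : (∑ B ∈ ℬ, c B) + (Fintype.card α : ℝ) * δ = s)
    (x : α → ℝ) (hx : ∀ e, 1 ≤ x e) :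
    ∏ e : α, (x e) ^ (1 + δ) ≤ (∑ B ∈ ℬ, ∏ e ∈ B, x e) ^ s := by
  have hx0 : ∀ e, (0:ℝ) < x e := fun e => lt_of_lt_of_le one_pos (hx e)
  have ht1 : ∀ B : Finset α, (1:ℝ) ≤ ∏ e ∈ B, x e := by
    intro B
    calc (1:ℝ) = ∏ _e ∈ B, (1:ℝ) := by simp
      _ ≤ ∏ e ∈ B, x e := Finset.prod_le_prod (by simp) (fun e _ => hx e)
  set ψ := ∑ B ∈ ℬ, ∏ e ∈ B, x e with hψ
  have htnn : ∀ B ∈ ℬ, (0:ℝ) ≤ ∏ e ∈ B, x e := fun B _ => zero_le_one.trans (ht1 B)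
  have hψt : ∀ B ∈ ℬ, ∏ e ∈ B, x e ≤ ψ := fun B hB => Finset.single_le_sum htnn hB
  obtain ⟨B₀, hB₀⟩ := hne
  have hψ1 : (1:ℝ) ≤ ψ := le_trans (ht1 B₀) (hψt B₀ hB₀)
  have hψ0 : (0:ℝ) < ψ := lt_of_lt_of_le one_pos hψ1
  have hψx : ∀ e : α, x e ≤ ψ := by
    intro e
    obtain ⟨B, hB, heB⟩ := hloopless e
    have h1 : x e ≤ ∏ i ∈ B, x i := by
      rw [← Finset.mul_prod_erase B x heB]
      exact le_mul_of_one_le_right (hx0 e).le (ht1 _)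
    exact le_trans h1 (hψt B hB)
  -- part 1 : ∏ e, x e ^ 1 ≤ ψ ^ (∑ c B)
  have h1 : ∏ e : α, (x e) ^ (1:ℝ) ≤ ψ ^ (∑ B ∈ ℬ, c B) := by
    rw [Real.rpow_sum_of_pos hψ0]
    calc ∏ e : α, (x e) ^ (1:ℝ)
        ≤ ∏ e : α, (x e) ^ (∑ B ∈ ℬ, c B * (if e ∈ B then 1 else 0)) := by
          refine Finset.prod_le_prod (fun e _ => Real.rpow_nonneg (hx0 e).le _) (fun e _ => ?_)
          exact Real.rpow_le_rpow_of_exponent_le (hx e) (hc1 e)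
      _ = ∏ e : α, ∏ B ∈ ℬ, (x e) ^ (c B * (if e ∈ B then 1 else 0)) := by
          refine Finset.prod_congr rfl (fun e _ => ?_)
          exact Real.rpow_sum_of_pos (hx0 e) _ _
      _ = ∏ B ∈ ℬ, ∏ e : α, (x e) ^ (c B * (if e ∈ B then 1 else 0)) := Finset.prod_comm
      _ = ∏ B ∈ ℬ, (∏ e ∈ B, x e) ^ (c B) := by
          refine Finset.prod_congr rfl (fun B hB => ?_)
          rw [← Real.finset_prod_rpow B x (fun e _ => (hx0 e).le)]
          rw [← Finset.prod_subset (Finset.subset_univ B)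
            (f := fun e => (x e) ^ (c B * (if e ∈ B then 1 else 0)))]
          · refine Finset.prod_congr rfl (fun e heB => ?_)
            rw [if_pos heB, mul_one]
          · intro e _ heB
            rw [if_neg heB, mul_zero, Real.rpow_zero]
      _ ≤ ∏ B ∈ ℬ, ψ ^ (c B) := by
          refine Finset.prod_le_prod (fun B hB => Real.rpow_nonneg (htnn B hB) _)
            (fun B hB => Real.rpow_le_rpow (htnn B hB) (hψt B hB) (hc0 B hB))
  -- part 2 : ∏ e, x e ^ δ ≤ ψ ^ (n δ)
  have h2 : ∏ e : α, (x e) ^ δ ≤ ψ ^ ((Fintype.card α : ℝ) * δ) := by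
    have hn : (Fintype.card α : ℝ) * δ = ∑ _e : α, δ := by
      rw [Finset.sum_const, nsmul_eq_mul, Finset.card_univ]
    rw [hn, Real.rpow_sum_of_pos hψ0]
    exact Finset.prod_le_prod (fun e _ => Real.rpow_nonneg (hx0 e).le _)
      (fun e _ => Real.rpow_le_rpow (hx0 e).le (hψx e) hδ)
  calc ∏ e : α, (x e) ^ (1 + δ)
      = (∏ e : α, (x e) ^ (1:ℝ)) * ∏ e : α, (x e) ^ δ := by
        rw [← Finset.prod_mul_distrib]
        exact Finset.prod_congr rfl (fun e _ => by
          rw [← Real.rpow_add (hx0 e)])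
    _ ≤ ψ ^ (∑ B ∈ ℬ, c B) * ψ ^ ((Fintype.card α : ℝ) * δ) := by
        refine mul_le_mul h1 h2 (Finset.prod_nonneg (fun e _ => Real.rpow_nonneg (hx0 e).le _))
          (Real.rpow_nonneg hψ0.le _)
    _ = ψ ^ s := by rw [← Real.rpow_add hψ0, hsC]

/-- Lemma 3.2(i) / the convergence half of Theorem A: for a loopless matroid with set of bases
`ℬ` on a finite nonempty ground set, with basis generating polynomial
`ψ_M(x) = Σ_{B∈ℬ} ∏_{e∈B} x_e` and
`c(M) = inf{ Σ_B c_B : c_B ≥ 0, Σ_B c_B·χ_B ≥ 𝟙 }`, for every `s > c(M)` the function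
`z ↦ 1 / (ψ_M((-ln|z_e|)_e)^s · ∏_e |z_e|²)` is integrable on the ball of radius
`ε ≤ e^{-1}` in `ℂ^E`. -/
theorem stmt_11 {α : Type*} [Fintype α] [DecidableEq α] [Nonempty α]
    (ℬ : Finset (Finset α)) (hne : ℬ.Nonempty)
    (r : ℕ) (hr : 1 ≤ r)
    (hcard : ∀ B ∈ ℬ, B.card = r)
    (hexch : ∀ B₁ ∈ ℬ, ∀ B₂ ∈ ℬ, ∀ e ∈ B₁ \ B₂,
      ∃ f ∈ B₂ \ B₁, insert f (B₁.erase e) ∈ ℬ)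
    (hloopless : ∀ e : α, ∃ B ∈ ℬ, e ∈ B)
    (cM : ℝ)
    (hcM : cM = sInf { t : ℝ | ∃ c : Finset α → ℝ, (∀ B ∈ ℬ, 0 ≤ c B) ∧
        (∀ e : α, 1 ≤ ∑ B ∈ ℬ, c B * (if e ∈ B then 1 else 0)) ∧ t = ∑ B ∈ ℬ, c B })
    (s : ℝ) (hs : cM < s)
    (ε : ℝ) (hε0 : 0 < ε) (hε1 : ε ≤ Real.exp (-1)) :
    IntegrableOn
      (fun z : α → ℂ =>
        1 / ((∑ B ∈ ℬ, ∏ e ∈ B, (-Real.log (‖z e‖))) ^ s *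
          ∏ e : α, ‖z e‖ ^ 2))
      (Metric.ball 0 ε) := by
  classical
  -- extract a feasible certificate with total weight < s
  set S := { t : ℝ | ∃ c : Finset α → ℝ, (∀ B ∈ ℬ, 0 ≤ c B) ∧
      (∀ e : α, 1 ≤ ∑ B ∈ ℬ, c B * (if e ∈ B then 1 else 0)) ∧ t = ∑ B ∈ ℬ, c B } with hS
  have hSne : S.Nonempty := by
    refine ⟨∑ B ∈ ℬ, (1:ℝ), fun _ => (1:ℝ), fun _ _ => zero_le_one, fun e => ?_, rfl⟩
    obtain ⟨B, hB, heB⟩ := hloopless e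
    have h2 := Finset.single_le_sum
      (f := fun B : Finset α => (1:ℝ) * (if e ∈ B then 1 else 0))
      (fun B _ => by positivity) hB
    simpa [heB] using h2
  have hSbdd : BddBelow S := by
    refine ⟨0, fun t ht => ?_⟩
    obtain ⟨c, hc0, _, rfl⟩ := ht
    exact Finset.sum_nonneg hc0
  have hlt : sInf S < s := by rw [hcM] at hs; exact hs
  obtain ⟨t, ⟨c, hc0, hc1, rfl⟩, hts⟩ := (csInf_lt_iff hSbdd hSne).mp hlt
  -- the margin δ
  have hn : (0:ℝ) < (Fintype.card α : ℝ) := by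
    exact_mod_cast Fintype.card_pos
  set δ : ℝ := (s - ∑ B ∈ ℬ, c B) / (Fintype.card α : ℝ) with hδdef
  have hδ : 0 < δ := div_pos (by linarith) hn
  have hsC : (∑ B ∈ ℬ, c B) + (Fintype.card α : ℝ) * δ = s := by
    rw [hδdef, mul_div_cancel₀ _ hn.ne']
    ring
  -- the dominating function
  set g1 : ℂ → ℝ := fun w => ((-Real.log (‖w‖)) ^ (1 + δ) * ‖w‖ ^ 2)⁻¹
    with hg1
  set G : ℂ → ℝ := (Metric.ball (0:ℂ) ε).indicator g1 with hG
  have hGint : Integrable G := aux_complex hδ hε0 hε1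
  have hΦ : Integrable (fun z : α → ℂ => ∏ e : α, G (z e)) :=
    Integrable.fintype_prod (fun _ => hGint)
  refine Integrable.mono' hΦ.integrableOn ?_ ?_
  · -- measurability
    apply Measurable.aestronglyMeasurable
    have m1 : Measurable (fun z : α → ℂ =>
        (∑ B ∈ ℬ, ∏ e ∈ B, (-Real.log (‖z e‖))) ^ s) := by
      apply (measurable_rpow_const s).comp
      apply Finset.measurable_sum
      intro B _
      apply Finset.measurable_prod
      intro e _
      exact (Real.measurable_log.comp (continuous_norm.measurable.comp (measurable_pi_apply e))).neg
    have m2 : Measurable (fun z : α → ℂ => ∏ e : α, ‖z e‖ ^ 2) := by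
      apply Finset.measurable_prod
      intro e _
      exact (continuous_norm.measurable.comp (measurable_pi_apply e)).pow_const 2
    exact measurable_const.div (m1.mul m2)
  · -- the pointwise bound, a.e. on the ball
    have hae : ∀ᵐ z : α → ℂ ∂(volume : Measure (α → ℂ)), ∀ e, z e ≠ 0 := by
      rw [ae_all_iff]
      intro e
      have := MeasureTheory.Measure.ae_eval_ne (fun _ : α => (volume : Measure ℂ)) e 0
      rwa [← volume_pi] at this
    filter_upwards [ae_restrict_of_ae hae, ae_restrict_mem measurableSet_ball]
      with z hz hzball
    set x : α → ℝ := fun e => -Real.log (‖z e‖) with hx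
    have habslt : ∀ e, ‖z e‖ < ε := by
      intro e
      have h1 : ‖z e‖ ≤ ‖z‖ := norm_le_pi_norm z e
      have h2 : ‖z‖ < ε := by rwa [Metric.mem_ball, dist_zero_right] at hzball
      exact lt_of_le_of_lt h1 h2
    have habs0 : ∀ e, 0 < ‖z e‖ := fun e => norm_pos_iff.mpr (hz e)
    have hx1 : ∀ e, 1 ≤ x e := by
      intro e
      have : Real.log (‖z e‖) < -1 := by
        have := Real.log_lt_log (habs0 e) (lt_of_lt_of_le (habslt e) hε1)
        rwa [Real.log_exp] at this
      simp only [hx]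
      linarith
    have key := aux_psi ℬ hne hloopless c hc0 hc1 δ s hδ.le hsC x hx1
    set ψ : ℝ := ∑ B ∈ ℬ, ∏ e ∈ B, x e with hψ
    set P : ℝ := ∏ e : α, ‖z e‖ ^ 2 with hP
    have hPpos : 0 < P := Finset.prod_pos (fun e _ => pow_pos (habs0 e) 2)
    have hψpos : 0 < ψ :=
      Finset.sum_pos (fun B _ => Finset.prod_pos (fun e _ =>
        lt_of_lt_of_le one_pos (hx1 e))) hne
    have hQpos : 0 < ∏ e : α, (x e) ^ (1 + δ) :=
      Finset.prod_pos (fun e _ => Real.rpow_pos_of_pos (lt_of_lt_of_le one_pos (hx1 e)) _)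
    have hGz : ∀ e, G (z e) = g1 (z e) := by
      intro e
      apply indicator_of_mem
      rw [Metric.mem_ball, dist_zero_right]
      exact habslt e
    have hprodG : ∏ e : α, G (z e) = ((∏ e : α, (x e) ^ (1 + δ)) * P)⁻¹ := by
      calc ∏ e : α, G (z e) = ∏ e : α, g1 (z e) :=
            Finset.prod_congr rfl (fun e _ => hGz e)
        _ = (∏ e : α, ((x e) ^ (1 + δ) * ‖z e‖ ^ 2))⁻¹ := by
            rw [← Finset.prod_inv_distrib]
        _ = ((∏ e : α, (x e) ^ (1 + δ)) * P)⁻¹ := by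
            rw [Finset.prod_mul_distrib]
    have hfnn : (0:ℝ) ≤ (ψ ^ s * P)⁻¹ :=
      inv_nonneg.mpr (mul_nonneg (Real.rpow_nonneg hψpos.le _) hPpos.le)
    show ‖1 / (ψ ^ s * P)‖ ≤ ∏ e : α, G (z e)
    rw [one_div, Real.norm_of_nonneg hfnn, hprodG]
    apply inv_anti₀ (mul_pos hQpos hPpos)
    exact mul_le_mul_of_nonneg_right key hPpos.le
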